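/- Let ρ : ℝ → ℝ be a differentiable positive function, and define the parametrized surface of revolution X(θ,z) = (ρ(z)cos θ, ρ(z)sin θ, z) and the everted surface Y(θ,z) = (ρ(z)cos θ, ρ(z)sin θ, −z). For each (θ,z), set e₁(θ) = (−sin θ, cos θ, 0) (the unit tangent to the parallels), and let α(z) be determined by cos α = (ρ'(z)² − 1)/(1 + ρ'(z)²) and sin α = 2ρ'(z)/(1 + ρ'(z)²). Then, with R = R(e₁(θ), α(z)) the Rodrigues rotation about e₁(θ) by angle α(z), one has ∂_θ Y(θ,z) = R (∂_θ X(θ,z)) and ∂_z Y(θ,z) = R (∂_z X(θ,z)) for every (θ,z). -/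

import Mathlib

noncomputable section

/-- Euclidean dot product on `ℝ³`. -/
def dot3 (x y : Fin 3 → ℝ) : ℝ := x 0 * y 0 + x 1 * y 1 + x 2 * y 2

/-- Cross product on `ℝ³`. -/
def cross3 (x y : Fin 3 → ℝ) : Fin 3 → ℝ :=
  ![x 1 * y 2 - x 2 * y 1, x 2 * y 0 - x 0 * y 2, x 0 * y 1 - x 1 * y 0]

/-- Partial derivative in the first variable. -/
def du {E : Type*} [NormedAddCommGroup E] [NormedSpace ℝ E]
    (f : ℝ × ℝ → E) (p : ℝ × ℝ) : E := fderiv ℝ f p (1, 0)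

/-- Partial derivative in the second variable. -/
def dv {E : Type*} [NormedAddCommGroup E] [NormedSpace ℝ E]
    (f : ℝ × ℝ → E) (p : ℝ × ℝ) : E := fderiv ℝ f p (0, 1)

/-- Rodrigues rotation about the unit vector `e` by the angle `a`. -/
def rodrigues (e : Fin 3 → ℝ) (a : ℝ) (x : Fin 3 → ℝ) : Fin 3 → ℝ :=
  Real.cos a • x + Real.sin a • cross3 e x + ((1 - Real.cos a) * dot3 e x) • e

/-- **Eversion of a surface of revolution is a pure bending**
(computational core of Proposition 6.6): the deformation gradient of the eversion
`Y` of the surface of revolution `X` with profile `ρ` is the Rodrigues rotation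
about the tangent `e₁` to the parallels by the angle `α` with
`cos α = (ρ'² − 1)/(1 + ρ'²)`, `sin α = 2ρ'/(1 + ρ'²)`. -/
lemma fderiv_pi3_apply (f0 f1 f2 : ℝ × ℝ → ℝ) (p v : ℝ × ℝ)
    (h0 : DifferentiableAt ℝ f0 p) (h1 : DifferentiableAt ℝ f1 p)
    (h2 : DifferentiableAt ℝ f2 p) :
    fderiv ℝ (fun q => ![f0 q, f1 q, f2 q]) p v
      = ![fderiv ℝ f0 p v, fderiv ℝ f1 p v, fderiv ℝ f2 p v] := by
  have key : fderiv ℝ (fun q (i : Fin 3) => ![f0 q, f1 q, f2 q] i) p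
      = ContinuousLinearMap.pi (fun i => fderiv ℝ (fun q => ![f0 q, f1 q, f2 q] i) p) := by
    apply fderiv_pi
    intro i
    fin_cases i <;> simpa using ‹_›
  have : fderiv ℝ (fun q => ![f0 q, f1 q, f2 q]) p v
      = fun i => fderiv ℝ (fun q => ![f0 q, f1 q, f2 q] i) p v := by
    rw [show (fun q => ![f0 q, f1 q, f2 q]) = (fun q (i : Fin 3) => ![f0 q, f1 q, f2 q] i) from rfl, key]
    rfl
  rw [this]
  funext i
  fin_cases i <;> simp

theorem eversion_pure_bending
    (ρ : ℝ → ℝ) (hρ : Differentiable ℝ ρ) (hpos : ∀ z, 0 < ρ z)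
    (X Y : ℝ × ℝ → Fin 3 → ℝ)
    (hX : X = fun p => ![ρ p.2 * Real.cos p.1, ρ p.2 * Real.sin p.1, p.2])
    (hY : Y = fun p => ![ρ p.2 * Real.cos p.1, ρ p.2 * Real.sin p.1, -p.2])
    (e₁ : ℝ → Fin 3 → ℝ)
    (he₁ : e₁ = fun θ => ![-Real.sin θ, Real.cos θ, 0])
    (α : ℝ → ℝ)
    (hcos : ∀ z, Real.cos (α z) = ((deriv ρ z) ^ 2 - 1) / (1 + (deriv ρ z) ^ 2))
    (hsin : ∀ z, Real.sin (α z) = 2 * deriv ρ z / (1 + (deriv ρ z) ^ 2)) :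
    ∀ p : ℝ × ℝ,
      du Y p = rodrigues (e₁ p.1) (α p.2) (du X p) ∧
      dv Y p = rodrigues (e₁ p.1) (α p.2) (dv X p) := by
  rintro ⟨θ, z⟩
  set r := deriv ρ z with hr
  -- derivatives of the building blocks
  have hR : HasFDerivAt (fun p : ℝ × ℝ => ρ p.2) (r • ContinuousLinearMap.snd ℝ ℝ ℝ) (θ, z) :=
    (hρ z).hasDerivAt.comp_hasFDerivAt _ (hasFDerivAt_snd)
  have hC : HasFDerivAt (fun p : ℝ × ℝ => Real.cos p.1)
      ((-Real.sin θ) • ContinuousLinearMap.fst ℝ ℝ ℝ) (θ, z) :=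
    (Real.hasDerivAt_cos θ).comp_hasFDerivAt (f := Prod.fst) (θ, z) (hasFDerivAt_fst (𝕜 := ℝ) (E := ℝ) (F := ℝ))
  have hS : HasFDerivAt (fun p : ℝ × ℝ => Real.sin p.1)
      ((Real.cos θ) • ContinuousLinearMap.fst ℝ ℝ ℝ) (θ, z) :=
    (Real.hasDerivAt_sin θ).comp_hasFDerivAt (f := Prod.fst) (θ, z) (hasFDerivAt_fst (𝕜 := ℝ) (E := ℝ) (F := ℝ))
  have h0 : HasFDerivAt (fun p : ℝ × ℝ => ρ p.2 * Real.cos p.1) _ (θ, z) := hR.mul hC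
  have h1 : HasFDerivAt (fun p : ℝ × ℝ => ρ p.2 * Real.sin p.1) _ (θ, z) := hR.mul hS
  have h2X : HasFDerivAt (fun p : ℝ × ℝ => p.2) (ContinuousLinearMap.snd ℝ ℝ ℝ) (θ, z) :=
    hasFDerivAt_snd
  have h2Y : HasFDerivAt (fun p : ℝ × ℝ => -p.2) _ (θ, z) := h2X.neg
  -- values of the four partial derivative vectors
  have hduX : du X (θ, z) = ![-(ρ z * Real.sin θ), ρ z * Real.cos θ, 0] := by
    rw [hX, du, fderiv_pi3_apply _ _ _ _ _ h0.differentiableAt h1.differentiableAt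
      h2X.differentiableAt, h0.fderiv, h1.fderiv, h2X.fderiv]
    simp
  have hdvX : dv X (θ, z) = ![r * Real.cos θ, r * Real.sin θ, 1] := by
    rw [hX, dv, fderiv_pi3_apply _ _ _ _ _ h0.differentiableAt h1.differentiableAt
      h2X.differentiableAt, h0.fderiv, h1.fderiv, h2X.fderiv]
    simp [mul_comm]
  have hduY : du Y (θ, z) = ![-(ρ z * Real.sin θ), ρ z * Real.cos θ, 0] := by
    rw [hY, du, fderiv_pi3_apply _ _ _ _ _ h0.differentiableAt h1.differentiableAt
      h2Y.differentiableAt, h0.fderiv, h1.fderiv, h2Y.fderiv]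
    simp
  have hdvY : dv Y (θ, z) = ![r * Real.cos θ, r * Real.sin θ, -1] := by
    rw [hY, dv, fderiv_pi3_apply _ _ _ _ _ h0.differentiableAt h1.differentiableAt
      h2Y.differentiableAt, h0.fderiv, h1.fderiv, h2Y.fderiv]
    simp [mul_comm]
  have hden : (1 : ℝ) + r ^ 2 ≠ 0 := by positivity
  have htrig : Real.sin θ ^ 2 + Real.cos θ ^ 2 = 1 := Real.sin_sq_add_cos_sq θ
  constructor
  · rw [hduX, hduY, he₁, rodrigues, hcos z, hsin z]
    funext i
    fin_cases i
    · simp only [cross3, dot3, Matrix.cons_val_zero, Matrix.cons_val_one, Matrix.head_cons,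
          Matrix.cons_val_two, Matrix.tail_cons, Pi.add_apply, Pi.smul_apply, smul_eq_mul, Fin.reduceFinMk, Fin.isValue]
      field_simp
      linear_combination (2 * ρ z * Real.sin θ) * htrig
    · simp only [cross3, dot3, Matrix.cons_val_zero, Matrix.cons_val_one, Matrix.head_cons,
          Matrix.cons_val_two, Matrix.tail_cons, Pi.add_apply, Pi.smul_apply, smul_eq_mul, Fin.reduceFinMk, Fin.isValue]
      field_simp
      linear_combination (-2 * ρ z * Real.cos θ) * htrig
    · simp only [cross3, dot3, Matrix.cons_val_zero, Matrix.cons_val_one, Matrix.head_cons,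
          Matrix.cons_val_two, Matrix.tail_cons, Pi.add_apply, Pi.smul_apply, smul_eq_mul, Fin.reduceFinMk, Fin.isValue]
      field_simp
      first
        | exact Or.inr trivial
        | exact Or.inr (by ring)
        | ring
        | tauto
  · rw [hdvX, hdvY, he₁, rodrigues, hcos z, hsin z]
    funext i
    fin_cases i
    · simp only [cross3, dot3, Matrix.cons_val_zero, Matrix.cons_val_one, Matrix.head_cons,
          Matrix.cons_val_two, Matrix.tail_cons, Pi.add_apply, Pi.smul_apply, smul_eq_mul, Fin.reduceFinMk, Fin.isValue]
      field_simp
      rw [hr]; ring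
    · simp only [cross3, dot3, Matrix.cons_val_zero, Matrix.cons_val_one, Matrix.head_cons,
          Matrix.cons_val_two, Matrix.tail_cons, Pi.add_apply, Pi.smul_apply, smul_eq_mul, Fin.reduceFinMk, Fin.isValue]
      field_simp
      rw [hr]; ring
    · simp only [cross3, dot3, Matrix.cons_val_zero, Matrix.cons_val_one, Matrix.head_cons,
          Matrix.cons_val_two, Matrix.tail_cons, Pi.add_apply, Pi.smul_apply, smul_eq_mul, Fin.reduceFinMk, Fin.isValue]
      field_simp
      linear_combination (2 * deriv ρ z ^ 2) * htrig
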